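/- Let (X, d) be a metric space and suppose x_E, x_O ∈ X satisfy d(x_E, x_O) = D = diam(X), and that d(x, x_E) + d(x, x_O) = D for every x ∈ X. Let γ₀, γ₁ ∈ X satisfy the cyclical monotonicity inequality d(γ₀, γ₁)² + D² ≤ d(γ₀, x_O)² + d(x_E, γ₁)². Then γ₀ = x_E or γ₁ = x_O. -/
import Mathlib


theorem statement16 {X : Type*} [MetricSpace X] (xE xO g0 g1 : X) (D : ℝ)
    (hD : dist xE xO = D)
    (hdiam : ∀ x y : X, dist x y ≤ D)
    (hsum : ∀ x : X, dist x xE + dist x xO = D)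
    (hcyc : dist g0 g1 ^ 2 + D ^ 2 ≤ dist g0 xO ^ 2 + dist xE g1 ^ 2) :
    g0 = xE ∨ g1 = xO := by
  have h0 := hsum g0
  have h1 := hsum g1
  have hb : dist xE g1 ≤ D := hdiam xE g1
  have ht := abs_dist_sub_le g1 g0 xE
  rcases abs_le.mp ht with ⟨ht1, ht2⟩
  have c1 : dist g1 g0 = dist g0 g1 := dist_comm _ _
  have c2 : dist g1 xE = dist xE g1 := dist_comm _ _
  have key : dist g0 xE * (D - dist xE g1) ≤ 0 := by
    nlinarith [dist_nonneg (x := g0) (y := g1), dist_nonneg (x := g0) (y := xE)]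
  have key' : dist g0 xE * (D - dist xE g1) = 0 :=
    le_antisymm key (mul_nonneg dist_nonneg (by linarith))
  rcases mul_eq_zero.mp key' with h | h
  · exact Or.inl (eq_of_dist_eq_zero h)
  · right
    have : dist g1 xO = 0 := by linarith
    exact eq_of_dist_eq_zero this
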